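/- arXiv:2404.14534 — 7 statements merged into one kernel-verified Lean document; each statement's English description precedes it below -/
import Mathlib

section
/- Under the logistic selection model P(R=1|X=x) = logistic(ψ₀+ψ₁x) with X | R=1 ~ N(μ,σ²), the conditional density of X given R=r (for r ∈ {0,1}) satisfies f(x | R=r) = f(x | R=1) · exp((x−μ)ψ₁(r−1) − ½ψ₁²(r−1)²σ²). -/
open MeasureTheory Real

noncomputable def normalPDF (μ σ2 x : ℝ) : ℝ :=
  (Real.sqrt (2 * Real.pi * σ2))⁻¹ * Real.exp (-(x - μ)^2 / (2 * σ2))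

noncomputable def logisticSel (ψ0 ψ1 x : ℝ) : ℝ :=
  Real.exp (ψ0 + ψ1 * x) / (1 + Real.exp (ψ0 + ψ1 * x))

/-- Bernoulli weight: `P(R=r|X=x)` for r ∈ {0,1}. -/
noncomputable def selWeight (ψ0 ψ1 : ℝ) (r x : ℝ) : ℝ :=
  if r = 1 then logisticSel ψ0 ψ1 x else 1 - logisticSel ψ0 ψ1 x

lemma normalPDF_eq_gaussian (μ : ℝ) (σ2 : ℝ) (hσ2 : 0 < σ2) (x : ℝ) :
    normalPDF μ σ2 x = ProbabilityTheory.gaussianPDFReal μ ⟨σ2, hσ2.le⟩ x := by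
  simp [normalPDF, ProbabilityTheory.gaussianPDFReal]
  rfl

/-- under logistic selection with `X|R=1 ~ N(μ,σ²)`,
`f(x|R=r) = f(x|R=1) · exp((x−μ)ψ₁(r−1) − ½ψ₁²(r−1)²σ²)` for r ∈ {0,1}. -/
theorem conditional_density_tilting
    (f : ℝ → ℝ) (μ σ2 ψ0 ψ1 : ℝ) (hσ2 : 0 < σ2)
    (hf_nonneg : ∀ x, 0 ≤ f x) (hf_meas : Measurable f) (hInt : Integrable f)
    (P : ℝ → ℝ)
    (hP : ∀ r, P r = ∫ x, selWeight ψ0 ψ1 r x * f x)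
    (hPpos : ∀ r, r = 0 ∨ r = 1 → 0 < P r)
    (hcond1 : ∀ x, selWeight ψ0 ψ1 1 x * f x / P 1 = normalPDF μ σ2 x) :
    ∀ r : ℝ, r = 0 ∨ r = 1 → ∀ x,
      selWeight ψ0 ψ1 r x * f x / P r =
        normalPDF μ σ2 x *
          Real.exp ((x - μ) * ψ1 * (r - 1) - ψ1 ^ 2 * (r - 1) ^ 2 * σ2 / 2) := by
  have hP1 : (0:ℝ) < P 1 := hPpos 1 (Or.inr rfl)
  -- selWeight 1 x * f x = P 1 * normalPDF μ σ2 x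
  have hLf : ∀ x, selWeight ψ0 ψ1 1 x * f x = P 1 * normalPDF μ σ2 x := by
    intro x
    have := hcond1 x
    field_simp at this
    linarith [this]
  intro r hr x
  rcases hr with h0 | h1
  · subst h0
    -- 1 - L = L * exp(-(ψ0+ψ1x))
    have hden : (0:ℝ) < 1 + Real.exp (ψ0 + ψ1 * x) := by positivity
    have hsel : selWeight ψ0 ψ1 0 x =
        selWeight ψ0 ψ1 1 x * Real.exp (-(ψ0 + ψ1 * x)) := by
      simp only [selWeight, if_pos rfl, if_neg (by norm_num : (0:ℝ) ≠ 1), logisticSel, ↓reduceIte]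
      rw [Real.exp_neg]
      field_simp
      ring
    set c : ℝ := Real.exp (-ψ0 - ψ1 * μ + ψ1 ^ 2 * σ2 / 2) with hc
    -- key pointwise identity
    have key : ∀ y, selWeight ψ0 ψ1 0 y * f y =
        (P 1 * c) * normalPDF (μ - ψ1 * σ2) σ2 y := by
      intro y
      have hdeny : (0:ℝ) < 1 + Real.exp (ψ0 + ψ1 * y) := by positivity
      have hsely : selWeight ψ0 ψ1 0 y =
          selWeight ψ0 ψ1 1 y * Real.exp (-(ψ0 + ψ1 * y)) := by
        simp only [selWeight, if_pos rfl, if_neg (by norm_num : (0:ℝ) ≠ 1), logisticSel, ↓reduceIte]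
        rw [Real.exp_neg]
        field_simp
        ring
      have hexp : normalPDF μ σ2 y * Real.exp (-(ψ0 + ψ1 * y)) =
          c * normalPDF (μ - ψ1 * σ2) σ2 y := by
        have hE : (-(y - μ)^2 / (2 * σ2)) + (-(ψ0 + ψ1 * y)) =
            (-ψ0 - ψ1 * μ + ψ1 ^ 2 * σ2 / 2) + (-(y - (μ - ψ1 * σ2))^2 / (2 * σ2)) := by
          field_simp
          ring
        simp only [normalPDF, hc]
        rw [mul_assoc, ← Real.exp_add, hE, Real.exp_add]
        ring
      rw [hsely, mul_right_comm, hLf y, mul_assoc, hexp]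
      ring
    -- compute P 0
    have hP0 : P 0 = P 1 * c := by
      rw [hP 0]
      have : (fun x => selWeight ψ0 ψ1 0 x * f x) =
          fun x => (P 1 * c) * ProbabilityTheory.gaussianPDFReal (μ - ψ1 * σ2) ⟨σ2, hσ2.le⟩ x := by
        funext y
        rw [key y, normalPDF_eq_gaussian _ _ hσ2]
      rw [this, MeasureTheory.integral_const_mul,
        ProbabilityTheory.integral_gaussianPDFReal_eq_one _ (v := ⟨σ2, hσ2.le⟩) (by
          intro h
          exact absurd (congrArg NNReal.toReal h) (fun h' => hσ2.ne' h')), mul_one]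
    have hc_pos : 0 < c := Real.exp_pos _
    rw [key x, hP0, mul_comm (P 1 * c), mul_div_assoc,
      div_self (by positivity : P 1 * c ≠ 0), mul_one]
    -- normalPDF (μ - ψ1σ2) σ2 x = normalPDF μ σ2 x * exp(...)
    have hE : (-(x - (μ - ψ1 * σ2))^2 / (2 * σ2)) =
        (-(x - μ)^2 / (2 * σ2)) + ((x - μ) * ψ1 * (0 - 1) - ψ1 ^ 2 * (0 - 1) ^ 2 * σ2 / 2) := by
      field_simp
      ring
    simp only [normalPDF]
    rw [hE, Real.exp_add]
    ring
  · subst h1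
    rw [hcond1 x]
    norm_num
end

section
/- If X | R=1 ~ N(μ,σ²) and P(R=1|X=x) = logistic(ψ₀+ψ₁x), then the difference of conditional means E[X | R=1] − E[X | R=0] equals ψ₁σ². -/
open MeasureTheory Real

open ProbabilityTheory

lemma gaussian_mean (m : ℝ) (v : NNReal) (hv : v ≠ 0) :
    ∫ x, x * gaussianPDFReal m v x = m := by
  have hvpos : (0:ℝ) < v := by positivity
  have hint1 : Integrable (fun y => y * gaussianPDFReal 0 v y) := by
    have h := (integrable_mul_exp_neg_mul_sq (b := (2*(v:ℝ))⁻¹) (by positivity)).const_mul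
      ((Real.sqrt (2*π*v))⁻¹)
    refine h.congr (Filter.Eventually.of_forall fun y => ?_)
    simp only [gaussianPDFReal, sub_zero]
    rw [show -(2*(v:ℝ))⁻¹ * y^2 = -y^2/(2*v) by field_simp]
    ring
  have key : ∫ y, y * gaussianPDFReal 0 v y = 0 := by
    have h1 := integral_neg_eq_self (fun y => y * gaussianPDFReal 0 v y) (volume : Measure ℝ)
    have h2 : ∀ y : ℝ, (-y) * gaussianPDFReal 0 v (-y) = -(y * gaussianPDFReal 0 v y) := by
      intro y
      simp only [gaussianPDFReal, sub_zero, neg_sq]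
      ring
    simp only [h2, integral_neg] at h1
    linarith
  calc ∫ x, x * gaussianPDFReal m v x
      = ∫ y, (y + m) * gaussianPDFReal m v (y + m) :=
        (integral_add_right_eq_self (fun x => x * gaussianPDFReal m v x) m).symm
    _ = ∫ y, (y * gaussianPDFReal 0 v y + m * gaussianPDFReal 0 v y) := by
        congr 1; funext y
        rw [gaussianPDFReal_add, sub_self]; ring
    _ = (∫ y, y * gaussianPDFReal 0 v y) + ∫ y, m * gaussianPDFReal 0 v y :=
        integral_add hint1 ((integrable_gaussianPDFReal 0 v).const_mul m)
    _ = m := by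
        rw [key, integral_const_mul, integral_gaussianPDFReal_eq_one 0 hv]
        ring

/-- `E[X|R=1] − E[X|R=0] = ψ₁σ²` under the logistic selection model. -/
theorem conditional_mean_difference
    (f : ℝ → ℝ) (μ σ2 ψ0 ψ1 : ℝ) (hσ2 : 0 < σ2)
    (hf_nonneg : ∀ x, 0 ≤ f x) (hf_meas : Measurable f) (hInt : Integrable f)
    (P1 P0 : ℝ)
    (hP1 : P1 = ∫ x, logisticSel ψ0 ψ1 x * f x)
    (hP0 : P0 = ∫ x, (1 - logisticSel ψ0 ψ1 x) * f x)
    (hP1pos : 0 < P1) (hP0pos : 0 < P0)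
    (hcond1 : ∀ x, logisticSel ψ0 ψ1 x * f x / P1 = normalPDF μ σ2 x) :
    (∫ x, x * (logisticSel ψ0 ψ1 x * f x / P1)) -
      (∫ x, x * ((1 - logisticSel ψ0 ψ1 x) * f x / P0)) = ψ1 * σ2 := by
  have hσ2' : (0:ℝ) ≤ σ2 := hσ2.le
  set v : NNReal := ⟨σ2, hσ2'⟩ with hvdef
  have hvne : v ≠ 0 := by
    intro h
    have : σ2 = 0 := congrArg NNReal.toReal h
    linarith
  have hpdf : ∀ m x, normalPDF m σ2 x = gaussianPDFReal m v x := fun m x => rfl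
  set c : ℝ := Real.exp (ψ1^2*σ2/2 - ψ1*μ - ψ0) with hcdef
  have hcpos : 0 < c := Real.exp_pos _
  set μ' : ℝ := μ - ψ1*σ2 with hμ'def
  have hkey : ∀ x, (1 - logisticSel ψ0 ψ1 x) * f x = P1 * c * gaussianPDFReal μ' v x := by
    intro x
    set E := Real.exp (ψ0 + ψ1 * x) with hE
    have hEpos : 0 < E := Real.exp_pos _
    have h1E : 0 < 1 + E := by positivity
    have ha : logisticSel ψ0 ψ1 x * f x = normalPDF μ σ2 x * P1 :=
      (div_eq_iff hP1pos.ne').1 (hcond1 x)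
    have hsel : 1 - logisticSel ψ0 ψ1 x = logisticSel ψ0 ψ1 x / E := by
      rw [logisticSel, ← hE]
      field_simp
      ring
    rw [hsel, div_mul_eq_mul_div, ha]
    have hg : gaussianPDFReal μ' v x
        = (Real.sqrt (2 * Real.pi * σ2))⁻¹ * Real.exp (-(x - μ')^2 / (2 * σ2)) := rfl
    rw [hg, normalPDF]
    have hexp : Real.exp (-(x - μ)^2 / (2 * σ2)) / E = c * Real.exp (-(x - μ')^2 / (2 * σ2)) := by
      rw [hE, ← Real.exp_sub, hcdef, ← Real.exp_add]
      congr 1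
      rw [hμ'def]
      field_simp
      ring
    have : (Real.sqrt (2 * Real.pi * σ2))⁻¹ * Real.exp (-(x - μ)^2 / (2 * σ2)) * P1 / E
        = (Real.sqrt (2 * Real.pi * σ2))⁻¹ * (Real.exp (-(x - μ)^2 / (2 * σ2)) / E) * P1 := by
      ring
    rw [this, hexp]
    ring
  have hP0eq : P0 = P1 * c := by
    rw [hP0]
    calc ∫ x, (1 - logisticSel ψ0 ψ1 x) * f x
        = ∫ x, P1 * c * gaussianPDFReal μ' v x := by
          congr 1; funext x; exact hkey x
      _ = P1 * c * ∫ x, gaussianPDFReal μ' v x := integral_const_mul _ _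
      _ = P1 * c := by rw [integral_gaussianPDFReal_eq_one μ' hvne, mul_one]
  have hI1 : (∫ x, x * (logisticSel ψ0 ψ1 x * f x / P1)) = μ := by
    calc (∫ x, x * (logisticSel ψ0 ψ1 x * f x / P1))
        = ∫ x, x * gaussianPDFReal μ v x := by
          congr 1; funext x; rw [hcond1 x, hpdf]
      _ = μ := gaussian_mean μ v hvne
  have hI0 : (∫ x, x * ((1 - logisticSel ψ0 ψ1 x) * f x / P0)) = μ' := by
    calc (∫ x, x * ((1 - logisticSel ψ0 ψ1 x) * f x / P0))
        = ∫ x, x * gaussianPDFReal μ' v x := by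
          congr 1; funext x
          have hne : P1 * c ≠ 0 := by positivity
          rw [hkey x, hP0eq, mul_div_assoc, mul_div_cancel₀ _ hne]
      _ = μ' := gaussian_mean μ' v hvne
  rw [hI1, hI0, hμ'def]
  ring
end

section
/- Let R, R' be conditionally independent given X with common selection probability p(x) = logistic(ψ₀+ψ₁x), and suppose X | R=1, R'=1 ~ N(μ,σ²). Then for r, r' ∈ {0,1}, the conditional distribution of X given R=r, R'=r' is N(μ + ψ₁(r+r'−2)σ², σ²). -/
open MeasureTheory Real

lemma normalPDF_eq_gaussian_s4 (m σ2 : ℝ) (h : 0 ≤ σ2) :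
    normalPDF m σ2 = ProbabilityTheory.gaussianPDFReal m ⟨σ2, h⟩ := by
  funext x
  simp [normalPDF, ProbabilityTheory.gaussianPDFReal, neg_div]
  rfl

lemma normalPDF_integral (m σ2 : ℝ) (h : 0 < σ2) : ∫ x, normalPDF m σ2 x = 1 := by
  rw [normalPDF_eq_gaussian_s4 m σ2 h.le]
  exact ProbabilityTheory.integral_gaussianPDFReal_eq_one m (by
    intro h0; exact h.ne' (congrArg NNReal.toReal h0))

lemma normalPDF_integrable (m σ2 : ℝ) (h : 0 < σ2) : Integrable (normalPDF m σ2) := by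
  rw [normalPDF_eq_gaussian_s4 m σ2 h.le]
  exact ProbabilityTheory.integrable_gaussianPDFReal m _

lemma selWeight_eq (ψ0 ψ1 r : ℝ) (hr : r = 0 ∨ r = 1) (x : ℝ) :
    selWeight ψ0 ψ1 r x = logisticSel ψ0 ψ1 x * Real.exp ((r - 1) * (ψ0 + ψ1 * x)) := by
  have hne : 1 + Real.exp (ψ0 + ψ1 * x) ≠ 0 := by positivity
  rcases hr with h | h <;> subst h
  · simp only [selWeight, if_neg (by norm_num : (0:ℝ) ≠ 1), logisticSel]
    rw [show ((0:ℝ) - 1) * (ψ0 + ψ1 * x) = -(ψ0 + ψ1 * x) by ring, Real.exp_neg]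
    field_simp
    ring
  · simp [selWeight, logisticSel]

lemma tilt (μ σ2 a x : ℝ) (h : 0 < σ2) :
    normalPDF μ σ2 x * Real.exp (a * x) =
      Real.exp (a * μ + a ^ 2 * σ2 / 2) * normalPDF (μ + a * σ2) σ2 x := by
  have h : Real.exp (a * μ + a ^ 2 * σ2 / 2) * Real.exp (-(x - (μ + a * σ2)) ^ 2 / (2 * σ2))
      = Real.exp (-(x - μ) ^ 2 / (2 * σ2)) * Real.exp (a * x) := by
    rw [← Real.exp_add, ← Real.exp_add]
    congr 1
    field_simp
    ring
  simp only [normalPDF]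
  calc (Real.sqrt (2 * Real.pi * σ2))⁻¹ * Real.exp (-(x - μ) ^ 2 / (2 * σ2)) * Real.exp (a * x)
      = (Real.sqrt (2 * Real.pi * σ2))⁻¹ *
        (Real.exp (-(x - μ) ^ 2 / (2 * σ2)) * Real.exp (a * x)) := by ring
    _ = (Real.sqrt (2 * Real.pi * σ2))⁻¹ *
        (Real.exp (a * μ + a ^ 2 * σ2 / 2) * Real.exp (-(x - (μ + a * σ2)) ^ 2 / (2 * σ2))) := by
        rw [h]
    _ = Real.exp (a * μ + a ^ 2 * σ2 / 2) *
        ((Real.sqrt (2 * Real.pi * σ2))⁻¹ * Real.exp (-(x - (μ + a * σ2)) ^ 2 / (2 * σ2))) := by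
        ring

/-- with two conditionally independent logistic indicators and
`X | R=1, R'=1 ~ N(μ,σ²)`, the conditional law of `X` given `R=r, R'=r'`
is `N(μ + ψ₁(r+r'−2)σ², σ²)`. -/
theorem cross_classified_normal
    (f : ℝ → ℝ) (μ σ2 ψ0 ψ1 : ℝ) (hσ2 : 0 < σ2)
    (hf_nonneg : ∀ x, 0 ≤ f x) (hf_meas : Measurable f) (hInt : Integrable f)
    (P : ℝ → ℝ → ℝ)
    (hP : ∀ r r', P r r' = ∫ x, selWeight ψ0 ψ1 r x * selWeight ψ0 ψ1 r' x * f x)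
    (hPpos : ∀ r r', (r = 0 ∨ r = 1) → (r' = 0 ∨ r' = 1) → 0 < P r r')
    (hcond11 : ∀ x,
      selWeight ψ0 ψ1 1 x * selWeight ψ0 ψ1 1 x * f x / P 1 1 = normalPDF μ σ2 x) :
    ∀ r r' : ℝ, (r = 0 ∨ r = 1) → (r' = 0 ∨ r' = 1) → ∀ x,
      selWeight ψ0 ψ1 r x * selWeight ψ0 ψ1 r' x * f x / P r r' =
        normalPDF (μ + ψ1 * (r + r' - 2) * σ2) σ2 x := by
  intro r r' hr hr'
  have hP11 : (0:ℝ) < P 1 1 := hPpos 1 1 (Or.inr rfl) (Or.inr rfl)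
  set a : ℝ := (r + r' - 2) * ψ1 with ha
  have hnum : ∀ y, selWeight ψ0 ψ1 1 y * selWeight ψ0 ψ1 1 y * f y
      = P 1 1 * normalPDF μ σ2 y := by
    intro y
    rw [← hcond11 y]
    field_simp
  set C : ℝ := P 1 1 * Real.exp ((r + r' - 2) * ψ0) *
      Real.exp (a * μ + a ^ 2 * σ2 / 2) with hC
  have hCpos : 0 < C := by positivity
  have key : ∀ y, selWeight ψ0 ψ1 r y * selWeight ψ0 ψ1 r' y * f y
      = C * normalPDF (μ + ψ1 * (r + r' - 2) * σ2) σ2 y := by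
    intro y
    rw [selWeight_eq ψ0 ψ1 r hr y, selWeight_eq ψ0 ψ1 r' hr' y]
    have h1 : logisticSel ψ0 ψ1 y * Real.exp ((r - 1) * (ψ0 + ψ1 * y)) *
        (logisticSel ψ0 ψ1 y * Real.exp ((r' - 1) * (ψ0 + ψ1 * y))) * f y
        = (logisticSel ψ0 ψ1 y * logisticSel ψ0 ψ1 y * f y) *
          (Real.exp ((r + r' - 2) * ψ0) * Real.exp (a * y)) := by
      have he : Real.exp ((r - 1) * (ψ0 + ψ1 * y)) * Real.exp ((r' - 1) * (ψ0 + ψ1 * y))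
          = Real.exp ((r + r' - 2) * ψ0) * Real.exp (a * y) := by
        rw [← Real.exp_add, ← Real.exp_add]
        congr 1
        rw [ha]; ring
      linear_combination (logisticSel ψ0 ψ1 y * logisticSel ψ0 ψ1 y * f y) * he
    have h11 : selWeight ψ0 ψ1 1 y = logisticSel ψ0 ψ1 y := by simp [selWeight]
    have h2 : logisticSel ψ0 ψ1 y * logisticSel ψ0 ψ1 y * f y
        = P 1 1 * normalPDF μ σ2 y := by rw [← h11]; exact hnum y
    rw [h1, h2]
    have h3 := tilt μ σ2 a y hσ2
    have hmean : μ + a * σ2 = μ + ψ1 * (r + r' - 2) * σ2 := by rw [ha]; ring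
    rw [hmean] at h3
    calc P 1 1 * normalPDF μ σ2 y * (Real.exp ((r + r' - 2) * ψ0) * Real.exp (a * y))
        = P 1 1 * Real.exp ((r + r' - 2) * ψ0) * (normalPDF μ σ2 y * Real.exp (a * y)) := by
          ring
      _ = C * normalPDF (μ + ψ1 * (r + r' - 2) * σ2) σ2 y := by rw [h3, hC]; ring
  have hPrr : P r r' = C := by
    rw [hP r r']
    calc (∫ x, selWeight ψ0 ψ1 r x * selWeight ψ0 ψ1 r' x * f x)
        = ∫ x, C * normalPDF (μ + ψ1 * (r + r' - 2) * σ2) σ2 x := by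
          exact integral_congr_ae (Filter.Eventually.of_forall key)
      _ = C * ∫ x, normalPDF (μ + ψ1 * (r + r' - 2) * σ2) σ2 x := by
          rw [integral_const_mul]
      _ = C := by rw [normalPDF_integral _ _ hσ2, mul_one]
  intro x
  rw [key x, hPrr, mul_comm, mul_div_assoc, div_self hCpos.ne', mul_one]
end

section
/- Under logistic selection P(R=1|X=x) = logistic(ψ₀+ψ₁x) with X | R=1 ~ N(μ,σ²), the conditional variance of X given R=0 equals σ², i.e., the selection shifts the mean but leaves the variance unchanged. -/
open MeasureTheory Real

open Filter Topology


lemma sq_tendsto_top : Tendsto (fun x : ℝ => x ^ 2) atTop atTop :=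
  tendsto_pow_atTop two_ne_zero

lemma sq_tendsto_bot : Tendsto (fun x : ℝ => x ^ 2) atBot atTop := by
  have h := sq_tendsto_top.comp tendsto_neg_atBot_atTop
  exact h.congr fun x => by simp [Function.comp_def]

lemma neg_mul_sq_tendsto {b : ℝ} (hb : 0 < b) (l : Filter ℝ)
    (h : Tendsto (fun x : ℝ => x ^ 2) l atTop) :
    Tendsto (fun x : ℝ => -b * x ^ 2) l atBot := by
  have h1 : Tendsto (fun x : ℝ => b * x ^ 2) l atTop := h.const_mul_atTop hb
  have := tendsto_neg_atTop_atBot.comp h1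
  simpa [Function.comp_def, neg_mul] using this

lemma exp_neg_sq_tendsto {b : ℝ} (hb : 0 < b) (l : Filter ℝ)
    (h : Tendsto (fun x : ℝ => x ^ 2) l atTop) :
    Tendsto (fun x : ℝ => Real.exp (-b * x ^ 2)) l (𝓝 0) :=
  Real.tendsto_exp_atBot.comp (neg_mul_sq_tendsto hb l h)

lemma x_exp_neg_sq_tendsto_top {b : ℝ} (hb : 0 < b) :
    Tendsto (fun x : ℝ => x * Real.exp (-b * x ^ 2)) atTop (𝓝 0) := by
  have h1 : Tendsto (fun x : ℝ => x * Real.exp (-x)) atTop (𝓝 0) := by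
    simpa using Real.tendsto_pow_mul_exp_neg_atTop_nhds_zero 1
  have h2 : Tendsto (fun x : ℝ => b * x) atTop atTop :=
    Tendsto.const_mul_atTop hb tendsto_id
  have h3 : Tendsto (fun x : ℝ => (b * x) * Real.exp (-(b * x)) / b) atTop (𝓝 0) := by
    have := (h1.comp h2).div_const b
    simpa [Function.comp_def] using this
  have h4 : Tendsto (fun x : ℝ => x * Real.exp (-b * x)) atTop (𝓝 0) := by
    refine h3.congr fun x => ?_
    field_simp
  refine squeeze_zero' ?_ ?_ h4
  · filter_upwards [eventually_ge_atTop (0:ℝ)] with x hx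
    positivity
  · filter_upwards [eventually_ge_atTop (1:ℝ)] with x hx
    have hx0 : (0:ℝ) ≤ x := by linarith
    have hxx : x ≤ x ^ 2 := by nlinarith
    have : -b * x ^ 2 ≤ -b * x := by nlinarith [mul_le_mul_of_nonneg_left hxx hb.le]
    exact mul_le_mul_of_nonneg_left (Real.exp_le_exp.2 this) hx0

lemma x_exp_neg_sq_tendsto_bot {b : ℝ} (hb : 0 < b) :
    Tendsto (fun x : ℝ => x * Real.exp (-b * x ^ 2)) atBot (𝓝 0) := by
  have := ((x_exp_neg_sq_tendsto_top hb).comp tendsto_neg_atBot_atTop).neg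
  simpa [Function.comp_def, neg_pow] using this

lemma integral_x_exp_neg_sq {b : ℝ} (hb : 0 < b) :
    ∫ x : ℝ, x * Real.exp (-b * x ^ 2) = 0 := by
  have hd : ∀ x : ℝ, HasDerivAt (fun x => -(2*b)⁻¹ * Real.exp (-b*x^2))
      (x * Real.exp (-b*x^2)) x := by
    intro x
    have h1 : HasDerivAt (fun x : ℝ => -b * x ^ 2) (-b * (2 * x)) x := by
      simpa using (hasDerivAt_pow 2 x).const_mul (-b)
    have h3 := h1.exp.const_mul (-(2*b)⁻¹)
    convert h3 using 1
    · rfl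
    · rfl
    have hb' : (2*b) ≠ 0 := by positivity
    linear_combination (-(x * Real.exp (-b*x^2))) * inv_mul_cancel₀ hb'
  have h0 := exp_neg_sq_tendsto hb atBot sq_tendsto_bot
  have h1 := exp_neg_sq_tendsto hb atTop sq_tendsto_top
  have := integral_of_hasDerivAt_of_tendsto hd (integrable_mul_exp_neg_mul_sq hb)
    ((h0.const_mul (-(2*b)⁻¹))) ((h1.const_mul (-(2*b)⁻¹)))
  simpa using this

lemma integrable_sq_exp_neg_sq {b : ℝ} (hb : 0 < b) :
    Integrable fun x : ℝ => x ^ 2 * Real.exp (-b * x ^ 2) := by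
  have := integrable_rpow_mul_exp_neg_mul_sq hb (s := 2) (by norm_num)
  simpa [Real.rpow_natCast] using this

lemma integral_sq_exp_neg_sq {b : ℝ} (hb : 0 < b) :
    ∫ x : ℝ, x ^ 2 * Real.exp (-b * x ^ 2) = Real.sqrt (Real.pi / b) / (2 * b) := by
  have hd : ∀ x : ℝ, HasDerivAt (fun x => -(2*b)⁻¹ * (x * Real.exp (-b*x^2)))
      (x ^ 2 * Real.exp (-b*x^2) - (2*b)⁻¹ * Real.exp (-b*x^2)) x := by
    intro x
    have h1 : HasDerivAt (fun x : ℝ => -b * x ^ 2) (-b * (2 * x)) x := by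
      simpa using (hasDerivAt_pow 2 x).const_mul (-b)
    have h2 := (hasDerivAt_id x).mul h1.exp
    have h3 := h2.const_mul (-(2*b)⁻¹)
    convert h3 using 1
    · rfl
    · rfl
    · rfl
    have hb' : (2*b) ≠ 0 := by positivity
    rw [id]
    linear_combination (-(x ^ 2 * Real.exp (-b*x^2))) * inv_mul_cancel₀ hb'
  have hint : Integrable fun x : ℝ =>
      x ^ 2 * Real.exp (-b*x^2) - (2*b)⁻¹ * Real.exp (-b*x^2) :=
    (integrable_sq_exp_neg_sq hb).sub ((integrable_exp_neg_mul_sq hb).const_mul _)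
  have hb0 := (x_exp_neg_sq_tendsto_bot hb).const_mul (-(2*b)⁻¹)
  have ht0 := (x_exp_neg_sq_tendsto_top hb).const_mul (-(2*b)⁻¹)
  have key := integral_of_hasDerivAt_of_tendsto hd hint
    (by simpa using hb0) (by simpa using ht0)
  rw [integral_sub (integrable_sq_exp_neg_sq hb)
    ((integrable_exp_neg_mul_sq hb).const_mul _), integral_const_mul,
    integral_gaussian] at key
  have : ∫ x : ℝ, x ^ 2 * Real.exp (-b * x ^ 2) = (2*b)⁻¹ * Real.sqrt (Real.pi / b) := by
    linarith
  rw [this]; ring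

lemma normalPDF_eq (m σ2 : ℝ) (hσ2 : 0 < σ2) (x : ℝ) :
    normalPDF m σ2 x
      = (Real.sqrt (2 * Real.pi * σ2))⁻¹ * Real.exp (-(2*σ2)⁻¹ * (x - m) ^ 2) := by
  unfold normalPDF
  congr 1
  congr 1
  field_simp

lemma sqrt_pi_div (σ2 : ℝ) (hσ2 : 0 < σ2) :
    Real.sqrt (Real.pi / (2*σ2)⁻¹) = Real.sqrt (2 * Real.pi * σ2) := by
  congr 1
  field_simp

lemma normal_integral_one (m σ2 : ℝ) (hσ2 : 0 < σ2) :
    ∫ x, normalPDF m σ2 x = 1 := by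
  have hb : 0 < (2*σ2)⁻¹ := by positivity
  simp_rw [normalPDF_eq m σ2 hσ2]
  obtain ⟨g, hg⟩ : ∃ g : ℝ → ℝ, g = fun y => (Real.sqrt (2 * Real.pi * σ2))⁻¹ *
      Real.exp (-(2*σ2)⁻¹ * y ^ 2) := ⟨_, rfl⟩
  rw [show (fun x => (Real.sqrt (2 * Real.pi * σ2))⁻¹ *
      Real.exp (-(2*σ2)⁻¹ * (x - m) ^ 2))
      = fun x => g (x - m) from funext fun x => by rw [hg],
    integral_sub_right_eq_self (μ := volume) g m, hg, integral_const_mul, integral_gaussian,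
    sqrt_pi_div σ2 hσ2, inv_mul_cancel₀]
  positivity

lemma normal_integral_mean (m σ2 : ℝ) (hσ2 : 0 < σ2) :
    ∫ x, x * normalPDF m σ2 x = m := by
  have hb : 0 < (2*σ2)⁻¹ := by positivity
  set c := (Real.sqrt (2 * Real.pi * σ2))⁻¹ with hc
  simp_rw [normalPDF_eq m σ2 hσ2]
  obtain ⟨g, hg⟩ : ∃ g : ℝ → ℝ, g = fun y => (y + m) * (c * Real.exp (-(2*σ2)⁻¹ * y ^ 2)) :=
    ⟨_, rfl⟩
  rw [show (fun x => x * (c * Real.exp (-(2*σ2)⁻¹ * (x - m) ^ 2)))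
      = fun x => g (x - m) from funext fun x => by rw [hg]; simp,
    integral_sub_right_eq_self (μ := volume) g m, hg]
  have hi1 : Integrable fun y : ℝ => y * (c * Real.exp (-(2*σ2)⁻¹ * y ^ 2)) := by
    have := (integrable_mul_exp_neg_mul_sq hb).const_mul c
    refine this.congr ?_
    filter_upwards with y
    ring
  have hi2 : Integrable fun y : ℝ => m * (c * Real.exp (-(2*σ2)⁻¹ * y ^ 2)) :=
    ((integrable_exp_neg_mul_sq hb).const_mul c).const_mul m
  have hsplit : (fun y : ℝ => (y + m) * (c * Real.exp (-(2*σ2)⁻¹ * y ^ 2)))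
      = fun y => y * (c * Real.exp (-(2*σ2)⁻¹ * y ^ 2))
        + m * (c * Real.exp (-(2*σ2)⁻¹ * y ^ 2)) := funext fun y => by ring
  rw [hsplit, integral_add hi1 hi2]
  have h1 : ∫ y : ℝ, y * (c * Real.exp (-(2*σ2)⁻¹ * y ^ 2)) = 0 := by
    have : (fun y : ℝ => y * (c * Real.exp (-(2*σ2)⁻¹ * y ^ 2)))
        = fun y => c * (y * Real.exp (-(2*σ2)⁻¹ * y ^ 2)) := funext fun y => by ring
    rw [this, integral_const_mul, integral_x_exp_neg_sq hb, mul_zero]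
  have h2 : ∫ y : ℝ, m * (c * Real.exp (-(2*σ2)⁻¹ * y ^ 2)) = m := by
    rw [integral_const_mul, integral_const_mul, integral_gaussian, sqrt_pi_div σ2 hσ2, hc,
      inv_mul_cancel₀ (by positivity), mul_one]
  rw [h1, h2, zero_add]

lemma normal_integral_var (m σ2 : ℝ) (hσ2 : 0 < σ2) :
    ∫ x, (x - m) ^ 2 * normalPDF m σ2 x = σ2 := by
  have hb : 0 < (2*σ2)⁻¹ := by positivity
  set c := (Real.sqrt (2 * Real.pi * σ2))⁻¹ with hc
  simp_rw [normalPDF_eq m σ2 hσ2]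
  obtain ⟨g, hg⟩ : ∃ g : ℝ → ℝ, g = fun y => y ^ 2 * (c * Real.exp (-(2*σ2)⁻¹ * y ^ 2)) :=
    ⟨_, rfl⟩
  rw [show (fun x => (x - m) ^ 2 * (c * Real.exp (-(2*σ2)⁻¹ * (x - m) ^ 2)))
      = fun x => g (x - m) from funext fun x => by rw [hg],
    integral_sub_right_eq_self (μ := volume) g m, hg]
  have : (fun y : ℝ => y ^ 2 * (c * Real.exp (-(2*σ2)⁻¹ * y ^ 2)))
      = fun y => c * (y ^ 2 * Real.exp (-(2*σ2)⁻¹ * y ^ 2)) := funext fun y => by ring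
  rw [this, integral_const_mul, integral_sq_exp_neg_sq hb, sqrt_pi_div σ2 hσ2]
  rw [hc]
  rw [show (2 * (2*σ2)⁻¹ : ℝ) = σ2⁻¹ by field_simp]
  have hne : Real.sqrt (2 * Real.pi * σ2) ≠ 0 := by positivity
  field_simp


/-- under logistic selection with `X|R=1 ~ N(μ,σ²)`, the
conditional variance of `X` given `R=0` is still `σ²`. -/
theorem missing_part_variance
    (f : ℝ → ℝ) (μ σ2 ψ0 ψ1 : ℝ) (hσ2 : 0 < σ2)
    (hf_nonneg : ∀ x, 0 ≤ f x) (hf_meas : Measurable f) (hInt : Integrable f)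
    (P1 P0 : ℝ)
    (hP1 : P1 = ∫ x, logisticSel ψ0 ψ1 x * f x)
    (hP0 : P0 = ∫ x, (1 - logisticSel ψ0 ψ1 x) * f x)
    (hP1pos : 0 < P1) (hP0pos : 0 < P0)
    (hcond1 : ∀ x, logisticSel ψ0 ψ1 x * f x / P1 = normalPDF μ σ2 x)
    (m0 : ℝ)
    (hm0 : m0 = ∫ x, x * ((1 - logisticSel ψ0 ψ1 x) * f x / P0)) :
    (∫ x, (x - m0) ^ 2 * ((1 - logisticSel ψ0 ψ1 x) * f x / P0)) = σ2 := by
  set μ' := μ - ψ1 * σ2 with hμ'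
  set K := Real.exp (ψ1 ^ 2 * σ2 / 2 - ψ1 * μ - ψ0) with hK
  have h1 : ∀ x, logisticSel ψ0 ψ1 x * f x = P1 * normalPDF μ σ2 x := by
    intro x
    have h := hcond1 x
    rw [div_eq_iff hP1pos.ne'] at h
    rw [h]; ring
  have h2 : ∀ x, 1 - logisticSel ψ0 ψ1 x
      = Real.exp (-(ψ0 + ψ1 * x)) * logisticSel ψ0 ψ1 x := by
    intro x
    unfold logisticSel
    have he : (0:ℝ) < 1 + Real.exp (ψ0 + ψ1 * x) := by positivity
    rw [Real.exp_neg]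
    field_simp
    ring
  have hexp : ∀ x, Real.exp (-(ψ0 + ψ1 * x)) * normalPDF μ σ2 x
      = K * normalPDF μ' σ2 x := by
    intro x
    unfold normalPDF
    rw [hK, hμ']
    have key : Real.exp (-(ψ0 + ψ1 * x)) * Real.exp (-(x - μ) ^ 2 / (2 * σ2))
        = Real.exp (ψ1 ^ 2 * σ2 / 2 - ψ1 * μ - ψ0)
          * Real.exp (-(x - (μ - ψ1 * σ2)) ^ 2 / (2 * σ2)) := by
      rw [← Real.exp_add, ← Real.exp_add]
      congr 1
      field_simp
      ring
    calc Real.exp (-(ψ0 + ψ1 * x)) * ((Real.sqrt (2 * Real.pi * σ2))⁻¹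
            * Real.exp (-(x - μ) ^ 2 / (2 * σ2)))
        = (Real.sqrt (2 * Real.pi * σ2))⁻¹ * (Real.exp (-(ψ0 + ψ1 * x))
            * Real.exp (-(x - μ) ^ 2 / (2 * σ2))) := by ring
      _ = (Real.sqrt (2 * Real.pi * σ2))⁻¹
            * (Real.exp (ψ1 ^ 2 * σ2 / 2 - ψ1 * μ - ψ0)
            * Real.exp (-(x - (μ - ψ1 * σ2)) ^ 2 / (2 * σ2))) := by rw [key]
      _ = _ := by ring
  have h3 : ∀ x, (1 - logisticSel ψ0 ψ1 x) * f x = (P1 * K) * normalPDF μ' σ2 x := by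
    intro x
    rw [h2 x, mul_assoc, h1 x,
      show Real.exp (-(ψ0 + ψ1 * x)) * (P1 * normalPDF μ σ2 x)
        = P1 * (Real.exp (-(ψ0 + ψ1 * x)) * normalPDF μ σ2 x) by ring,
      hexp x]
    ring
  have hP0K : P0 = P1 * K := by
    rw [hP0]
    simp_rw [h3]
    rw [integral_const_mul, normal_integral_one μ' σ2 hσ2, mul_one]
  have hne : P1 * K ≠ 0 := by rw [← hP0K]; exact hP0pos.ne'
  have hdens : ∀ x, (1 - logisticSel ψ0 ψ1 x) * f x / P0 = normalPDF μ' σ2 x := by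
    intro x
    rw [h3 x, hP0K, mul_comm, mul_div_assoc, div_self hne, mul_one]
  have hm0' : m0 = μ' := by
    rw [hm0]
    simp_rw [hdens]
    exact normal_integral_mean μ' σ2 hσ2
  simp_rw [hdens, hm0']
  exact normal_integral_var μ' σ2 hσ2
end

section
/- In the two-indicator logistic model (R, R' conditionally i.i.d. Bernoulli(logistic(ψ₀+ψ₁x)) given X, and X | R=1,R'=1 ~ N(μ,σ²)), the four conditional means satisfy μ₁₁ − μ₁₀ = μ₁₀ − μ₀₀ and μ₁₀ = μ₀₁, i.e., the means E[X|R=r,R'=r'] are equally spaced along an arithmetic progression with common difference ψ₁σ². -/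
open MeasureTheory Real

lemma normalPDF_eq_gaussian_s14 (m v : ℝ) (hv : 0 < v) :
    normalPDF m v = ProbabilityTheory.gaussianPDFReal m ⟨v, hv.le⟩ := rfl

lemma integral_normalPDF (m v : ℝ) (hv : 0 < v) : ∫ x, normalPDF m v x = 1 := by
  rw [normalPDF_eq_gaussian_s14 m v hv]
  exact ProbabilityTheory.integral_gaussianPDFReal_eq_one m (fun h => hv.ne' (congrArg NNReal.toReal h))

lemma integrable_normalPDF (m v : ℝ) (hv : 0 < v) : Integrable (normalPDF m v) := by
  rw [normalPDF_eq_gaussian_s14 m v hv]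
  exact ProbabilityTheory.integrable_gaussianPDFReal m _

lemma integrable_mul_normalPDF (m v : ℝ) (hv : 0 < v) :
    Integrable (fun x => x * normalPDF m v x) := by
  have h0 : Integrable (fun x => x * normalPDF 0 v x) := by
    have hb : 0 < (2*v)⁻¹ := by positivity
    have := (integrable_mul_exp_neg_mul_sq hb).const_mul (Real.sqrt (2 * Real.pi * v))⁻¹
    apply this.congr
    filter_upwards with x
    simp only [normalPDF]
    rw [show -(x - 0)^2 / (2*v) = -((2*v)⁻¹ * x^2) by field_simp; ring]
    ring
  have := h0.comp_sub_right m
  apply (this.add ((integrable_normalPDF m v hv).const_mul m)).congr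
  filter_upwards with x
  have : normalPDF 0 v (x - m) = normalPDF m v x := by
    simp only [normalPDF]; ring_nf
  simp only [Pi.add_apply, this]
  ring

lemma integral_mul_normalPDF (m v : ℝ) (hv : 0 < v) :
    ∫ x, x * normalPDF m v x = m := by
  have hshift : ∀ x : ℝ, normalPDF m v (x + m) = normalPDF 0 v x := by
    intro x; simp only [normalPDF]; ring_nf
  have h1 : ∫ x, x * normalPDF m v x = ∫ x, (x + m) * normalPDF 0 v x := by
    rw [← MeasureTheory.integral_add_right_eq_self (fun x => x * normalPDF m v x) m]
    congr 1; funext x; rw [hshift]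
  have hodd : ∫ x, x * normalPDF 0 v x = 0 := by
    have h := MeasureTheory.integral_neg_eq_self (fun x => x * normalPDF 0 v x) volume
    have heq : ∀ x : ℝ, (-x) * normalPDF 0 v (-x) = -(x * normalPDF 0 v x) := by
      intro x; simp only [normalPDF]; ring_nf
    simp only [heq] at h
    rw [integral_neg] at h
    linarith
  have hi1 : Integrable (fun x => x * normalPDF 0 v x) := by
    simpa using integrable_mul_normalPDF 0 v hv
  have hi2 : Integrable (fun x => m * normalPDF 0 v x) :=
    (integrable_normalPDF 0 v hv).const_mul m
  rw [h1]
  have : (fun x => (x + m) * normalPDF 0 v x) =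
      fun x => x * normalPDF 0 v x + m * normalPDF 0 v x := by funext x; ring
  rw [this, integral_add hi1 hi2, hodd, MeasureTheory.integral_const_mul, integral_normalPDF 0 v hv]
  ring

lemma shift_normalPDF (μ σ2 ψ0 ψ1 : ℝ) (hσ2 : 0 < σ2) (k x : ℝ) :
    normalPDF μ σ2 x * Real.exp (-(k*(ψ0 + ψ1*x))) =
    Real.exp (-(k*ψ0) - k*ψ1*μ + k^2*ψ1^2*σ2/2) * normalPDF (μ - k*ψ1*σ2) σ2 x := by
  have h : -(x - μ)^2 / (2*σ2) + (-(k*(ψ0 + ψ1*x))) =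
      (-(k*ψ0) - k*ψ1*μ + k^2*ψ1^2*σ2/2) + (-(x - (μ - k*ψ1*σ2))^2 / (2*σ2)) := by
    field_simp
    ring
  simp only [normalPDF]
  rw [mul_assoc, ← Real.exp_add, h, Real.exp_add]
  ring


/-- in the two-indicator logistic model the four conditional means
`μ_{rr'} = E[X|R=r,R'=r']` are equally spaced: `μ₁₁ − μ₁₀ = μ₁₀ − μ₀₀` and
`μ₁₀ = μ₀₁`, with common difference `ψ₁σ²`. -/
theorem equally_spaced_means
    (f : ℝ → ℝ) (μ σ2 ψ0 ψ1 : ℝ) (hσ2 : 0 < σ2)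
    (hf_nonneg : ∀ x, 0 ≤ f x) (hf_meas : Measurable f) (hInt : Integrable f)
    (P : ℝ → ℝ → ℝ)
    (hP : ∀ r r', P r r' = ∫ x, selWeight ψ0 ψ1 r x * selWeight ψ0 ψ1 r' x * f x)
    (hPpos : ∀ r r', (r = 0 ∨ r = 1) → (r' = 0 ∨ r' = 1) → 0 < P r r')
    (hcond11 : ∀ x,
      selWeight ψ0 ψ1 1 x * selWeight ψ0 ψ1 1 x * f x / P 1 1 = normalPDF μ σ2 x)
    (m : ℝ → ℝ → ℝ)
    (hm : ∀ r r', m r r' =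
      ∫ x, x * (selWeight ψ0 ψ1 r x * selWeight ψ0 ψ1 r' x * f x / P r r')) :
    m 1 1 - m 1 0 = m 1 0 - m 0 0 ∧ m 1 0 = m 0 1 ∧ m 1 1 - m 1 0 = ψ1 * σ2 := by
  have hs1 : ∀ x, selWeight ψ0 ψ1 1 x = logisticSel ψ0 ψ1 x := by
    intro x; simp [selWeight]
  have hs0 : ∀ x, selWeight ψ0 ψ1 0 x = 1 - logisticSel ψ0 ψ1 x := by
    intro x; simp [selWeight]
  have hP11 : 0 < P 1 1 := hPpos 1 1 (Or.inr rfl) (Or.inr rfl)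
  have hbase : ∀ x, logisticSel ψ0 ψ1 x * logisticSel ψ0 ψ1 x * f x
      = P 1 1 * normalPDF μ σ2 x := by
    intro x
    have h := hcond11 x
    rw [hs1] at h
    rw [div_eq_iff hP11.ne'] at h
    linarith [h]
  have hone : ∀ x, 1 - logisticSel ψ0 ψ1 x
      = logisticSel ψ0 ψ1 x * Real.exp (-(ψ0 + ψ1 * x)) := by
    intro x
    have hd : (0:ℝ) < 1 + Real.exp (ψ0 + ψ1 * x) := by positivity
    simp only [logisticSel, Real.exp_neg]
    field_simp
    ring
  set C1 : ℝ := Real.exp (-ψ0 - ψ1*μ + ψ1^2*σ2/2) with hC1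
  set C2 : ℝ := Real.exp (-(2*ψ0) - 2*ψ1*μ + 2^2*ψ1^2*σ2/2) with hC2
  have eq1 : ∀ x, selWeight ψ0 ψ1 1 x * selWeight ψ0 ψ1 0 x * f x
      = (P 1 1 * C1) * normalPDF (μ - ψ1*σ2) σ2 x := by
    intro x
    have s1 := shift_normalPDF μ σ2 ψ0 ψ1 hσ2 1 x
    norm_num at s1
    rw [hs1, hs0, hone x]
    calc logisticSel ψ0 ψ1 x * (logisticSel ψ0 ψ1 x * Real.exp (-(ψ0 + ψ1 * x))) * f x
        = (logisticSel ψ0 ψ1 x * logisticSel ψ0 ψ1 x * f x) * Real.exp (-(ψ0 + ψ1 * x)) := by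
          ring
      _ = P 1 1 * (normalPDF μ σ2 x * Real.exp (-(ψ0 + ψ1 * x))) := by rw [hbase x]; ring
      _ = (P 1 1 * C1) * normalPDF (μ - ψ1*σ2) σ2 x := by
          rw [show (-(ψ0 + ψ1 * x)) = -(ψ1*x) + -ψ0 by ring, s1, hC1]
          ring
  have eq2 : ∀ x, selWeight ψ0 ψ1 0 x * selWeight ψ0 ψ1 0 x * f x
      = (P 1 1 * C2) * normalPDF (μ - 2*ψ1*σ2) σ2 x := by
    intro x
    have s2 := shift_normalPDF μ σ2 ψ0 ψ1 hσ2 2 x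
    rw [hs0, hone x]
    calc (logisticSel ψ0 ψ1 x * Real.exp (-(ψ0 + ψ1 * x))) *
          (logisticSel ψ0 ψ1 x * Real.exp (-(ψ0 + ψ1 * x))) * f x
        = (logisticSel ψ0 ψ1 x * logisticSel ψ0 ψ1 x * f x) *
          (Real.exp (-(ψ0 + ψ1 * x)) * Real.exp (-(ψ0 + ψ1 * x))) := by ring
      _ = P 1 1 * (normalPDF μ σ2 x * Real.exp (-(2*(ψ0 + ψ1 * x)))) := by
          rw [hbase x, ← Real.exp_add]; ring_nf
      _ = (P 1 1 * C2) * normalPDF (μ - 2*ψ1*σ2) σ2 x := by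
          rw [s2, hC2]; ring_nf
  have hP10 : P 1 0 = P 1 1 * C1 := by
    rw [hP 1 0]
    rw [show (fun x => selWeight ψ0 ψ1 1 x * selWeight ψ0 ψ1 0 x * f x)
        = fun x => (P 1 1 * C1) * normalPDF (μ - ψ1*σ2) σ2 x from funext eq1]
    rw [MeasureTheory.integral_const_mul, integral_normalPDF _ _ hσ2, mul_one]
  have hP00 : P 0 0 = P 1 1 * C2 := by
    rw [hP 0 0]
    rw [show (fun x => selWeight ψ0 ψ1 0 x * selWeight ψ0 ψ1 0 x * f x)
        = fun x => (P 1 1 * C2) * normalPDF (μ - 2*ψ1*σ2) σ2 x from funext eq2]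
    rw [MeasureTheory.integral_const_mul, integral_normalPDF _ _ hσ2, mul_one]
  have hP01 : P 0 1 = P 1 0 := by
    rw [hP 0 1, hP 1 0]
    congr 1; funext x; ring
  have hm11 : m 1 1 = μ := by
    rw [hm 1 1]
    rw [show (fun x => x * (selWeight ψ0 ψ1 1 x * selWeight ψ0 ψ1 1 x * f x / P 1 1))
        = fun x => x * normalPDF μ σ2 x from funext fun x => by rw [hcond11 x]]
    exact integral_mul_normalPDF _ _ hσ2
  have hm10 : m 1 0 = μ - ψ1*σ2 := by
    rw [hm 1 0]
    rw [show (fun x => x * (selWeight ψ0 ψ1 1 x * selWeight ψ0 ψ1 0 x * f x / P 1 0))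
        = fun x => x * normalPDF (μ - ψ1*σ2) σ2 x from funext fun x => by
          rw [eq1 x, hP10,
            mul_div_cancel_left₀ _ (by positivity : P 1 1 * C1 ≠ 0)]]
    exact integral_mul_normalPDF _ _ hσ2
  have hm00 : m 0 0 = μ - 2*ψ1*σ2 := by
    rw [hm 0 0]
    rw [show (fun x => x * (selWeight ψ0 ψ1 0 x * selWeight ψ0 ψ1 0 x * f x / P 0 0))
        = fun x => x * normalPDF (μ - 2*ψ1*σ2) σ2 x from funext fun x => by
          rw [eq2 x, hP00,
            mul_div_cancel_left₀ _ (by positivity : P 1 1 * C2 ≠ 0)]]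
    exact integral_mul_normalPDF _ _ hσ2
  have hm01 : m 0 1 = m 1 0 := by
    rw [hm 0 1, hm 1 0, hP01]
    congr 1; funext x; ring
  refine ⟨by rw [hm11, hm10, hm00]; ring, hm01.symm, by rw [hm11, hm10]; ring⟩
end

section
/- Suppose X | R=1 has density g with MGF finite at −ψ₁, and P(R=1|X=x) = logistic(ψ₀+ψ₁x). Then E[X | R=0] = M'(−ψ₁)/M(−ψ₁), where M(t) = ∫ e^{tx} g(x) dx is the MGF of X given R=1, assuming M is differentiable at −ψ₁. -/
open MeasureTheory Real

lemma exp_le_add' {a b s x : ℝ} (has : a ≤ s) (hsb : s ≤ b) :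
    Real.exp (s * x) ≤ Real.exp (a * x) + Real.exp (b * x) := by
  rcases le_or_gt 0 x with hx | hx
  · have : Real.exp (s * x) ≤ Real.exp (b * x) :=
      Real.exp_le_exp.mpr (mul_le_mul_of_nonneg_right hsb hx)
    linarith [Real.exp_pos (a * x)]
  · have : Real.exp (s * x) ≤ Real.exp (a * x) :=
      Real.exp_le_exp.mpr (mul_le_mul_of_nonpos_right has hx.le)
    linarith [Real.exp_pos (b * x)]

lemma abs_le_exp_add' {c x : ℝ} (hc : 0 < c) :
    |x| ≤ (Real.exp (c * x) + Real.exp (-(c * x))) / c := by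
  rw [le_div_iff₀ hc, mul_comm]
  have h1 : c * |x| ≤ Real.exp (c * |x|) := by
    linarith [Real.add_one_le_exp (c * |x|)]
  refine h1.trans ?_
  rcases abs_cases x with ⟨h, _⟩ | ⟨h, _⟩
  · rw [h]; linarith [Real.exp_pos (-(c * x))]
  · rw [h, mul_neg]; linarith [Real.exp_pos (c * x)]

/-- `E[X|R=0] = M'(−ψ₁)/M(−ψ₁)`, where `M` is the MGF of
`X` given `R=1`, under the logistic selection model. -/
theorem missing_mean_via_mgf
    (f g : ℝ → ℝ) (ψ0 ψ1 : ℝ)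
    (hf_nonneg : ∀ x, 0 ≤ f x) (hf_meas : Measurable f) (hInt : Integrable f)
    (P1 P0 : ℝ)
    (hP1 : P1 = ∫ x, logisticSel ψ0 ψ1 x * f x)
    (hP0 : P0 = ∫ x, (1 - logisticSel ψ0 ψ1 x) * f x)
    (hP1pos : 0 < P1) (hP0pos : 0 < P0)
    (hg : ∀ x, g x = logisticSel ψ0 ψ1 x * f x / P1)
    (M : ℝ → ℝ)
    (hM : ∀ t, M t = ∫ x, Real.exp (t * x) * g x)
    (hMint : Integrable (fun x => Real.exp (-ψ1 * x) * g x))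
    (M' : ℝ)
    (hM' : HasDerivAt M M' (-ψ1)) :
    (∫ x, x * ((1 - logisticSel ψ0 ψ1 x) * f x / P0)) = M' / M (-ψ1) := by
  have hLpos : ∀ x, 0 < 1 + Real.exp (ψ0 + ψ1 * x) := fun x => by positivity
  -- key pointwise identity
  have hkey : ∀ x, (1 - logisticSel ψ0 ψ1 x) * f x
      = (Real.exp (-ψ0) * P1) * (Real.exp (-ψ1 * x) * g x) := by
    intro x
    have e1 : Real.exp (ψ0 + ψ1 * x) = Real.exp ψ0 * Real.exp (ψ1 * x) := Real.exp_add _ _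
    have e2 : Real.exp (-ψ1 * x) = (Real.exp (ψ1 * x))⁻¹ := by
      rw [← Real.exp_neg]; ring_nf
    have e3 : Real.exp (-ψ0) = (Real.exp ψ0)⁻¹ := Real.exp_neg _
    have h1 := (hLpos x).ne'
    have h2 := Real.exp_ne_zero ψ0
    have h3 := Real.exp_ne_zero (ψ1 * x)
    have h4 := hP1pos.ne'
    rw [hg, logisticSel, e1, e2, e3] at *
    field_simp
    ring
  -- measurability of g
  have hLc : Continuous fun x => logisticSel ψ0 ψ1 x := by
    unfold logisticSel
    exact (Real.continuous_exp.comp (by continuity)).div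
      (by continuity) (fun x => (hLpos x).ne')
  have hgm : Measurable g := by
    have : g = fun x => logisticSel ψ0 ψ1 x * f x / P1 := funext hg
    rw [this]
    exact (hLc.measurable.mul hf_meas).div_const P1
  have hg_nonneg : ∀ x, 0 ≤ g x := by
    intro x
    rw [hg, logisticSel]
    have := hf_nonneg x
    positivity
  -- P0 in terms of M
  have hP0eq : P0 = Real.exp (-ψ0) * P1 * M (-ψ1) := by
    rw [hP0, hM]
    simp_rw [hkey]
    exact integral_const_mul _ _
  have hMpos : 0 < M (-ψ1) := by
    have h := hP0eq
    have hc : 0 < Real.exp (-ψ0) * P1 := by positivity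
    nlinarith
  -- integrability on a neighborhood
  have hcont : ContinuousAt M (-ψ1) := hM'.continuousAt
  obtain ⟨δ, hδpos, hδ⟩ := Metric.mem_nhds_iff.mp (hcont (Ioi_mem_nhds hMpos))
  have hInt_t : ∀ t ∈ Metric.ball (-ψ1) δ, Integrable (fun x => Real.exp (t * x) * g x) := by
    intro t ht
    by_contra h
    have h0 : M t = 0 := by rw [hM]; exact integral_undef h
    have := hδ ht
    simp only [Set.mem_preimage, Set.mem_Ioi, h0] at this
    exact lt_irrefl 0 this
  set a : ℝ := -ψ1 - δ/2 with ha_def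
  set b : ℝ := -ψ1 + δ/2 with hb_def
  have hia : Integrable (fun x => Real.exp (a * x) * g x) := by
    apply hInt_t
    rw [Metric.mem_ball, Real.dist_eq, ha_def,
      show -ψ1 - δ/2 - -ψ1 = -(δ/2) by ring, abs_neg, abs_of_nonneg (by linarith)]
    linarith
  have hib : Integrable (fun x => Real.exp (b * x) * g x) := by
    apply hInt_t
    rw [Metric.mem_ball, Real.dist_eq, hb_def,
      show -ψ1 + δ/2 - -ψ1 = δ/2 by ring, abs_of_nonneg (by linarith)]
    linarith
  set c : ℝ := δ/4 with hc_def
  have hcpos : (0:ℝ) < c := by positivity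
  -- differentiation under the integral
  have hder := hasDerivAt_integral_of_dominated_loc_of_deriv_le (μ := volume)
      (F := fun t x => Real.exp (t * x) * g x)
      (F' := fun t x => x * (Real.exp (t * x) * g x))
      (bound := fun x => (2/c) * ((Real.exp (a * x) + Real.exp (b * x)) * g x))
      (x₀ := -ψ1) (Metric.ball_mem_nhds _ hcpos)
      (Filter.Eventually.of_forall fun t =>
        ((Real.measurable_exp.comp (measurable_id.const_mul t)).mul hgm).aestronglyMeasurable)
      hMint
      ((measurable_id.mul ((Real.measurable_exp.comp
        (measurable_id.const_mul (-ψ1))).mul hgm)).aestronglyMeasurable)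
      (Filter.Eventually.of_forall fun x => by
        intro t ht
        rw [Metric.mem_ball, Real.dist_eq] at ht
        have habs := abs_lt.mp ht
        have hta : a ≤ t - c := by simp only [ha_def, hc_def] at *; linarith
        have htb : t - c ≤ b := by simp only [hb_def, hc_def] at *; linarith
        have hta' : a ≤ t + c := by simp only [ha_def, hc_def] at *; linarith
        have htb' : t + c ≤ b := by simp only [hb_def, hc_def] at *; linarith
        have e1 : Real.exp (c * x) * Real.exp (t * x) = Real.exp ((t + c) * x) := by
          rw [← Real.exp_add]; ring_nf
        have e2 : Real.exp (-(c * x)) * Real.exp (t * x) = Real.exp ((t - c) * x) := by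
          rw [← Real.exp_add]; ring_nf
        have b1 : Real.exp ((t + c) * x) ≤ Real.exp (a * x) + Real.exp (b * x) :=
          exp_le_add' hta' htb'
        have b2 : Real.exp ((t - c) * x) ≤ Real.exp (a * x) + Real.exp (b * x) :=
          exp_le_add' hta htb
        have h1 : |x| ≤ (Real.exp (c * x) + Real.exp (-(c * x))) / c := abs_le_exp_add' hcpos
        have h2 : |x| * Real.exp (t * x)
            ≤ (2/c) * (Real.exp (a * x) + Real.exp (b * x)) := by
          have h3 : |x| * Real.exp (t * x)
              ≤ ((Real.exp (c * x) + Real.exp (-(c * x))) / c) * Real.exp (t * x) :=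
            mul_le_mul_of_nonneg_right h1 (Real.exp_pos _).le
          have h4 : ((Real.exp (c * x) + Real.exp (-(c * x))) / c) * Real.exp (t * x)
              = (Real.exp ((t + c) * x) + Real.exp ((t - c) * x)) / c := by
            rw [div_mul_eq_mul_div, add_mul, e1, e2]
          rw [h4] at h3
          refine h3.trans ?_
          calc (Real.exp ((t + c) * x) + Real.exp ((t - c) * x)) / c
              ≤ (2 * (Real.exp (a * x) + Real.exp (b * x))) / c := by
                gcongr
                linarith
            _ = (2/c) * (Real.exp (a * x) + Real.exp (b * x)) := by ring
        have hnorm : ‖x * (Real.exp (t * x) * g x)‖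
            = |x| * Real.exp (t * x) * g x := by
          rw [norm_mul, norm_mul, Real.norm_eq_abs, Real.norm_eq_abs, Real.norm_eq_abs,
            abs_of_nonneg (Real.exp_pos _).le, abs_of_nonneg (hg_nonneg x), mul_assoc]
        rw [hnorm]
        calc |x| * Real.exp (t * x) * g x
            ≤ ((2/c) * (Real.exp (a * x) + Real.exp (b * x))) * g x :=
              mul_le_mul_of_nonneg_right h2 (hg_nonneg x)
          _ = (2/c) * ((Real.exp (a * x) + Real.exp (b * x)) * g x) := by ring)
      (by
        have : Integrable (fun x => Real.exp (a * x) * g x + Real.exp (b * x) * g x) :=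
          hia.add hib
        simpa [add_mul, mul_add] using this.const_mul (2/c))
      (Filter.Eventually.of_forall fun x => by
        intro t ht
        have h := (((hasDerivAt_id t).mul_const x).exp).mul_const (g x)
        simp only [id_eq, one_mul] at h
        convert h using 1
        exacts [rfl, by ring])
  obtain ⟨hF'int, hderiv⟩ := hder
  have hMfun : M = fun t => ∫ x, Real.exp (t * x) * g x := funext hM
  have hM'eq : M' = ∫ x, x * (Real.exp (-ψ1 * x) * g x) := by
    apply hM'.unique
    rw [hMfun]
    exact hderiv
  -- final computation
  calc (∫ x, x * ((1 - logisticSel ψ0 ψ1 x) * f x / P0))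
      = ∫ x, (Real.exp (-ψ0) * P1 / P0) * (x * (Real.exp (-ψ1 * x) * g x)) := by
        congr 1
        funext x
        rw [hkey x]
        ring
    _ = (Real.exp (-ψ0) * P1 / P0) * ∫ x, x * (Real.exp (-ψ1 * x) * g x) :=
        integral_const_mul _ _
    _ = M' / M (-ψ1) := by
        rw [← hM'eq, hP0eq]
        have h1 : Real.exp (-ψ0) * P1 ≠ 0 := by positivity
        field_simp
end

section
/- In the logistic selection model with covariate: P(R=1|X=x, Z=z) = logistic(ψ₀+ψ₁x+ψ₂z), if X | Z=z, R=1 ~ N(μ_z, σ²) for each z, then X | Z=z, R=0 ~ N(μ_z − ψ₁σ², σ²); in particular the shift δ = ψ₁σ² does not depend on z or on ψ₂. -/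
open MeasureTheory Real

lemma normal_integral (μ σ2 : ℝ) (h : 0 < σ2) : ∫ x, normalPDF μ σ2 x = 1 := by
  unfold normalPDF
  rw [integral_const_mul]
  have h1 : (∫ x, Real.exp (-(x - μ)^2 / (2*σ2))) = Real.sqrt (2*Real.pi*σ2) := by
    have hshift : (∫ x, Real.exp (-(x - μ)^2 / (2*σ2)))
        = ∫ x, Real.exp (-x^2 / (2*σ2)) := by
      exact integral_sub_right_eq_self (fun x => Real.exp (-x^2 / (2*σ2))) μ
    rw [hshift]
    have := integral_gaussian (1/(2*σ2))
    have heq : (fun x : ℝ => Real.exp (-x^2 / (2*σ2)))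
        = fun x : ℝ => Real.exp (-(1/(2*σ2)) * x^2) := by
      funext x; congr 1; field_simp
    rw [heq, this]
    congr 1
    field_simp
  rw [h1, inv_mul_cancel₀]
  positivity

lemma exp_shift (a b μ σ2 x : ℝ) (hσ2 : 0 < σ2) :
    Real.exp (-(a + b*x)) * normalPDF μ σ2 x
      = Real.exp (-(a + b*μ) + b^2*σ2/2) * normalPDF (μ - b*σ2) σ2 x := by
  have key : Real.exp (-(a + b*x)) * Real.exp (-(x-μ)^2/(2*σ2))
      = Real.exp (-(a+b*μ)+b^2*σ2/2) * Real.exp (-(x-(μ-b*σ2))^2/(2*σ2)) := by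
    rw [← Real.exp_add, ← Real.exp_add]
    congr 1
    field_simp
    ring
  unfold normalPDF
  calc Real.exp (-(a + b*x)) * ((Real.sqrt (2*Real.pi*σ2))⁻¹ * Real.exp (-(x-μ)^2/(2*σ2)))
      = (Real.sqrt (2*Real.pi*σ2))⁻¹ * (Real.exp (-(a + b*x)) * Real.exp (-(x-μ)^2/(2*σ2))) := by ring
    _ = (Real.sqrt (2*Real.pi*σ2))⁻¹ * (Real.exp (-(a+b*μ)+b^2*σ2/2) * Real.exp (-(x-(μ-b*σ2))^2/(2*σ2))) := by rw [key]
    _ = Real.exp (-(a+b*μ)+b^2*σ2/2) * ((Real.sqrt (2*Real.pi*σ2))⁻¹ * Real.exp (-(x-(μ-b*σ2))^2/(2*σ2))) := by ring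

/-- logistic selection with a covariate `Z`:
`P(R=1|X=x,Z=z) = logistic(ψ₀+ψ₁x+ψ₂z)` and `X|Z=z,R=1 ~ N(μ_z,σ²)` imply
`X|Z=z,R=0 ~ N(μ_z − ψ₁σ², σ²)`; the shift does not depend on `z` or `ψ₂`. -/
theorem covariate_logistic_shift
    (fz : ℝ → ℝ → ℝ) (μz : ℝ → ℝ) (σ2 ψ0 ψ1 ψ2 : ℝ) (hσ2 : 0 < σ2)
    (hfz_nonneg : ∀ z x, 0 ≤ fz z x)
    (hfz_meas : ∀ z, Measurable (fz z))
    (hfz_int : ∀ z, Integrable (fz z))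
    (p : ℝ → ℝ → ℝ)
    (hp : ∀ z x, p z x = logisticSel (ψ0 + ψ2 * z) ψ1 x)
    (P1 P0 : ℝ → ℝ)
    (hP1 : ∀ z, P1 z = ∫ x, p z x * fz z x)
    (hP0 : ∀ z, P0 z = ∫ x, (1 - p z x) * fz z x)
    (hP1pos : ∀ z, 0 < P1 z) (hP0pos : ∀ z, 0 < P0 z)
    (hcond1 : ∀ z x, p z x * fz z x / P1 z = normalPDF (μz z) σ2 x) :
    ∀ z x, (1 - p z x) * fz z x / P0 z = normalPDF (μz z - ψ1 * σ2) σ2 x := by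
  intro z x₀
  set a := ψ0 + ψ2 * z with ha
  set C := Real.exp (-(a + ψ1 * μz z) + ψ1^2*σ2/2) * P1 z with hC
  have hCpos : 0 < C := by
    apply mul_pos (Real.exp_pos _) (hP1pos z)
  have hkey : ∀ x, (1 - p z x) * fz z x = C * normalPDF (μz z - ψ1*σ2) σ2 x := by
    intro x
    have hE := Real.exp_pos (a + ψ1 * x)
    have hden : (0:ℝ) < 1 + Real.exp (a + ψ1 * x) := by positivity
    have hpf : p z x * fz z x = normalPDF (μz z) σ2 x * P1 z := by
      have h := hcond1 z x
      rw [div_eq_iff (hP1pos z).ne'] at h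
      exact h
    rw [hp] at hpf ⊢
    unfold logisticSel at hpf ⊢
    rw [← ha] at hpf ⊢
    have hfzx : fz z x = normalPDF (μz z) σ2 x * P1 z * ((1 + Real.exp (a + ψ1*x)) / Real.exp (a + ψ1*x)) := by
      field_simp at hpf ⊢
      linarith [hpf]
    rw [hfzx]
    have hstep : (1 - Real.exp (a + ψ1*x) / (1 + Real.exp (a + ψ1*x))) *
        (normalPDF (μz z) σ2 x * P1 z * ((1 + Real.exp (a + ψ1*x)) / Real.exp (a + ψ1*x)))
        = Real.exp (-(a + ψ1*x)) * normalPDF (μz z) σ2 x * P1 z := by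
      rw [Real.exp_neg]
      field_simp
      ring
    rw [hstep]
    have := exp_shift a ψ1 (μz z) σ2 x hσ2
    rw [hC]
    calc Real.exp (-(a + ψ1*x)) * normalPDF (μz z) σ2 x * P1 z
        = (Real.exp (-(a + ψ1*x)) * normalPDF (μz z) σ2 x) * P1 z := by ring
      _ = (Real.exp (-(a + ψ1*μz z) + ψ1^2*σ2/2) * normalPDF (μz z - ψ1*σ2) σ2 x) * P1 z := by rw [this]
      _ = Real.exp (-(a + ψ1*μz z) + ψ1^2*σ2/2) * P1 z * normalPDF (μz z - ψ1*σ2) σ2 x := by ring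
  have hP0C : P0 z = C := by
    rw [hP0 z]
    simp_rw [hkey]
    rw [integral_const_mul, normal_integral _ _ hσ2, mul_one]
  rw [hkey x₀, hP0C, mul_comm, mul_div_assoc, div_self hCpos.ne', mul_one]
end
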